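/- The supersymmetric bilinear form B(a,b) = str(a*b) on the Weyl algebra A_n is nondegenerate: if B(a,b) = 0 for all b ∈ A_n then a = 0. -/

import Mathlib

open MvPolynomial

variable (n : ℕ)

/-- The single-contraction bidifferential operator `Σ π^{jk} ∂_{y^j} ⊗ ∂_{y^k}`,
acting on polynomials in a doubled set of variables: the left factor lives in the
`Sum.inl` copy, the right factor in the `Sum.inr` copy. -/
noncomputable def moyalStep (π : Matrix (Fin (2 * n)) (Fin (2 * n)) ℂ) :
    Module.End ℂ (MvPolynomial (Fin (2 * n) ⊕ Fin (2 * n)) ℂ) :=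
  ∑ j : Fin (2 * n), ∑ k : Fin (2 * n),
    π j k • ((pderiv (Sum.inl j)).toLinearMap ∘ₗ (pderiv (Sum.inr k)).toLinearMap)

/-- The Moyal star product `a ∗ b = a · exp(i ∂_{y^j}^← π^{jk} ∂_{y^k}^→) · b`
on the polynomial Weyl algebra `A_n = ℂ[y^1,…,y^{2n}]`.  Since `a` is a
polynomial, the exponential series truncates at `totalDegree a`. -/
noncomputable def moyal (π : Matrix (Fin (2 * n)) (Fin (2 * n)) ℂ)
    (a b : MvPolynomial (Fin (2 * n)) ℂ) : MvPolynomial (Fin (2 * n)) ℂ :=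
  ∑ m ∈ Finset.range (a.totalDegree + 1),
    ((Complex.I ^ m) / (m.factorial : ℂ)) •
      (rename (Sum.elim id id))
        (((moyalStep n π) ^ m) (rename Sum.inl a * rename Sum.inr b))

/-- The parity automorphism `a(y) ↦ a(-y)`. -/
noncomputable def parityMap :
    MvPolynomial (Fin (2 * n)) ℂ →ₐ[ℂ] MvPolynomial (Fin (2 * n)) ℂ :=
  aeval fun j => -(X j)

noncomputable def Pform (π : Matrix (Fin (2 * n)) (Fin (2 * n)) ℂ) :
    ℕ → MvPolynomial (Fin (2 * n)) ℂ → MvPolynomial (Fin (2 * n)) ℂ → ℂ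
  | 0, a, b => constantCoeff a * constantCoeff b
  | m + 1, a, b => ∑ j : Fin (2 * n), ∑ k : Fin (2 * n),
      π j k * Pform π m (pderiv j a) (pderiv k b)

lemma pderiv_inr_rename_inl (j : Fin (2 * n)) (a : MvPolynomial (Fin (2 * n)) ℂ) :
    pderiv (Sum.inr j : Fin (2 * n) ⊕ Fin (2 * n)) (rename Sum.inl a) = 0 := by
  apply pderiv_eq_zero_of_notMem_vars
  intro hmem
  obtain ⟨i, -, hi⟩ := Finset.mem_image.mp (vars_rename Sum.inl a hmem)
  exact Sum.inl_ne_inr hi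

lemma pderiv_inl_rename_inr (j : Fin (2 * n)) (a : MvPolynomial (Fin (2 * n)) ℂ) :
    pderiv (Sum.inl j : Fin (2 * n) ⊕ Fin (2 * n)) (rename Sum.inr a) = 0 := by
  apply pderiv_eq_zero_of_notMem_vars
  intro hmem
  obtain ⟨i, -, hi⟩ := Finset.mem_image.mp (vars_rename Sum.inr a hmem)
  exact Sum.inr_ne_inl hi

lemma moyalStep_apply (π : Matrix (Fin (2 * n)) (Fin (2 * n)) ℂ)
    (a b : MvPolynomial (Fin (2 * n)) ℂ) :
    moyalStep n π (rename Sum.inl a * rename Sum.inr b)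
      = ∑ j : Fin (2 * n), ∑ k : Fin (2 * n),
          π j k • (rename Sum.inl (pderiv j a) * rename Sum.inr (pderiv k b)) := by
  rw [moyalStep, LinearMap.sum_apply]
  refine Finset.sum_congr rfl fun j _ => ?_
  rw [LinearMap.sum_apply]
  refine Finset.sum_congr rfl fun k _ => ?_
  rw [LinearMap.smul_apply, LinearMap.comp_apply]
  congr 1
  simp only [Derivation.coeFn_coe]
  rw [pderiv_mul, pderiv_inr_rename_inl, zero_mul, zero_add,
    pderiv_rename Sum.inr_injective, pderiv_mul, pderiv_inl_rename_inr,
    mul_zero, add_zero, pderiv_rename Sum.inl_injective]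

lemma constantCoeff_moyalStep_pow (π : Matrix (Fin (2 * n)) (Fin (2 * n)) ℂ) (m : ℕ) :
    ∀ a b : MvPolynomial (Fin (2 * n)) ℂ,
      constantCoeff ((moyalStep n π ^ m) (rename Sum.inl a * rename Sum.inr b))
        = Pform n π m a b := by
  induction m with
  | zero =>
    intro a b
    simp [Pform, constantCoeff_rename]
  | succ m ih =>
    intro a b
    rw [pow_succ, Module.End.mul_apply, moyalStep_apply, map_sum, map_sum]
    rw [Pform]
    refine Finset.sum_congr rfl fun j _ => ?_
    rw [map_sum, map_sum]
    refine Finset.sum_congr rfl fun k _ => ?_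
    rw [map_smul, smul_eq_C_mul, map_mul, constantCoeff_C, ih]

lemma constantCoeff_moyal (π : Matrix (Fin (2 * n)) (Fin (2 * n)) ℂ)
    (a b : MvPolynomial (Fin (2 * n)) ℂ) :
    constantCoeff (moyal n π a b)
      = ∑ m ∈ Finset.range (a.totalDegree + 1),
          (Complex.I ^ m / (m.factorial : ℂ)) * Pform n π m a b := by
  rw [moyal, map_sum]
  refine Finset.sum_congr rfl fun m _ => ?_
  rw [smul_eq_C_mul, map_mul, constantCoeff_C, constantCoeff_rename, constantCoeff_moyalStep_pow]


noncomputable def Rform : ℕ → MvPolynomial (Fin (2 * n)) ℂ → MvPolynomial (Fin (2 * n)) ℂ → ℂ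
  | 0, a, c => constantCoeff a * constantCoeff c
  | m + 1, a, c => ∑ j : Fin (2 * n), Rform m (pderiv j a) (pderiv j c)

lemma Pform_smul_right (π : Matrix (Fin (2 * n)) (Fin (2 * n)) ℂ) (m : ℕ) :
    ∀ (a b : MvPolynomial (Fin (2 * n)) ℂ) (x : ℂ),
      Pform n π m a (x • b) = x * Pform n π m a b := by
  induction m with
  | zero =>
    intro a b x
    simp only [Pform, smul_eq_C_mul, map_mul, constantCoeff_C]
    ring
  | succ m ih =>
    intro a b x
    simp only [Pform, Derivation.map_smul, ih, Finset.mul_sum]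
    refine Finset.sum_congr rfl fun j _ => Finset.sum_congr rfl fun k _ => by ring

lemma Pform_add_right (π : Matrix (Fin (2 * n)) (Fin (2 * n)) ℂ) (m : ℕ) :
    ∀ (a b b' : MvPolynomial (Fin (2 * n)) ℂ),
      Pform n π m a (b + b') = Pform n π m a b + Pform n π m a b' := by
  induction m with
  | zero =>
    intro a b b'
    simp only [Pform, map_add]
    ring
  | succ m ih =>
    intro a b b'
    simp only [Pform, map_add, ih, mul_add, Finset.sum_add_distrib]

lemma Pform_zero_right (π : Matrix (Fin (2 * n)) (Fin (2 * n)) ℂ) (m : ℕ)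
    (a : MvPolynomial (Fin (2 * n)) ℂ) : Pform n π m a 0 = 0 := by
  have := Pform_smul_right n π m a 0 0
  simpa using this

lemma Pform_sum_right (π : Matrix (Fin (2 * n)) (Fin (2 * n)) ℂ) (m : ℕ)
    (a : MvPolynomial (Fin (2 * n)) ℂ) {ι : Type*} (s : Finset ι)
    (f : ι → MvPolynomial (Fin (2 * n)) ℂ) :
    Pform n π m a (∑ i ∈ s, f i) = ∑ i ∈ s, Pform n π m a (f i) := by
  classical
  induction s using Finset.cons_induction with
  | empty => simpa using Pform_zero_right n π m a
  | cons i s hi ih =>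
    rw [Finset.sum_cons, Finset.sum_cons, Pform_add_right, ih]

noncomputable def vmap (π : Matrix (Fin (2 * n)) (Fin (2 * n)) ℂ) :
    Fin (2 * n) → MvPolynomial (Fin (2 * n)) ℂ :=
  fun k => ∑ i : Fin (2 * n), (π⁻¹ i k) • X i

lemma pderiv_vmap (π : Matrix (Fin (2 * n)) (Fin (2 * n)) ℂ) (k i : Fin (2 * n)) :
    pderiv k (vmap n π i) = C (π⁻¹ k i) := by
  rw [vmap, map_sum]
  simp only [Derivation.map_smul, pderiv_X, Pi.single_apply, smul_ite, smul_zero]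
  rw [Finset.sum_ite_eq' Finset.univ k fun l => π⁻¹ l i • (1 : MvPolynomial (Fin (2 * n)) ℂ)]
  simp [smul_eq_C_mul]

lemma constantCoeff_vmap (π : Matrix (Fin (2 * n)) (Fin (2 * n)) ℂ) (i : Fin (2 * n)) :
    constantCoeff (vmap n π i) = 0 := by
  simp [vmap, smul_eq_C_mul]

lemma constantCoeff_aeval_vmap (π : Matrix (Fin (2 * n)) (Fin (2 * n)) ℂ)
    (c : MvPolynomial (Fin (2 * n)) ℂ) :
    constantCoeff (aeval (vmap n π) c) = constantCoeff c := by
  induction c using MvPolynomial.induction_on with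
  | C r => simp
  | add p q hp hq => rw [map_add, map_add, map_add, hp, hq]
  | mul_X p i hp => simp [constantCoeff_vmap]

lemma vmap_chain (π : Matrix (Fin (2 * n)) (Fin (2 * n)) ℂ) (hnondeg : IsUnit π.det)
    (j : Fin (2 * n)) (c : MvPolynomial (Fin (2 * n)) ℂ) :
    ∑ k : Fin (2 * n), π j k • pderiv k (aeval (vmap n π) c)
      = aeval (vmap n π) (pderiv j c) := by
  induction c using MvPolynomial.induction_on with
  | C r => simp
  | add p q hp hq => simp only [map_add, smul_add, Finset.sum_add_distrib, hp, hq]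
  | mul_X p i hp =>
    have key : ∀ k : Fin (2 * n), pderiv k (aeval (vmap n π) (p * X i))
        = pderiv k (aeval (vmap n π) p) * vmap n π i
          + aeval (vmap n π) p * C (π⁻¹ k i) := by
      intro k
      rw [map_mul, aeval_X, pderiv_mul, pderiv_vmap]
    calc ∑ k : Fin (2 * n), π j k • pderiv k (aeval (vmap n π) (p * X i))
        = (∑ k : Fin (2 * n), π j k • pderiv k (aeval (vmap n π) p)) * vmap n π i
          + aeval (vmap n π) p * C ((π * π⁻¹) j i) := by
          rw [Finset.sum_mul, Matrix.mul_apply, map_sum, Finset.mul_sum,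
            ← Finset.sum_add_distrib]
          refine Finset.sum_congr rfl fun k _ => ?_
          rw [key, smul_add, smul_mul_assoc]
          congr 1
          rw [smul_eq_C_mul, C_mul]
          ring
      _ = aeval (vmap n π) (pderiv j (p * X i)) := by
          rw [hp, Matrix.mul_nonsing_inv π hnondeg, pderiv_mul, map_add, map_mul, map_mul,
            aeval_X, pderiv_X, Pi.single_apply, Matrix.one_apply]
          congr 1
          by_cases hij : i = j
          · subst hij; simp
          · simp [hij, Ne.symm hij]

lemma Pform_vmap (π : Matrix (Fin (2 * n)) (Fin (2 * n)) ℂ) (hnondeg : IsUnit π.det) (m : ℕ) :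
    ∀ a c : MvPolynomial (Fin (2 * n)) ℂ,
      Pform n π m a (aeval (vmap n π) c) = Rform n m a c := by
  induction m with
  | zero =>
    intro a c
    rw [Pform, Rform, constantCoeff_aeval_vmap]
  | succ m ih =>
    intro a c
    rw [Pform, Rform]
    refine Finset.sum_congr rfl fun j _ => ?_
    calc ∑ k : Fin (2 * n), π j k * Pform n π m (pderiv j a) (pderiv k (aeval (vmap n π) c))
        = Pform n π m (pderiv j a)
            (∑ k : Fin (2 * n), π j k • pderiv k (aeval (vmap n π) c)) := by
          rw [Pform_sum_right]
          exact Finset.sum_congr rfl fun k _ => (Pform_smul_right n π m _ _ _).symm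
      _ = Rform n m (pderiv j a) (pderiv j c) := by rw [vmap_chain n π hnondeg, ih]

lemma degree_eq_sum_univ {N : ℕ} (α : Fin N →₀ ℕ) : α.degree = ∑ i : Fin N, α i :=
  Finset.sum_subset (Finset.subset_univ _)
    (fun i _ hi => Finsupp.notMem_support_iff.1 hi)

lemma sub_single_apply_ne {N : ℕ} (α : Fin N →₀ ℕ) (j i : Fin N) (h : i ≠ j) :
    ((α - Finsupp.single j 1 : _ →₀ ℕ) i) = α i := by
  rw [Finsupp.tsub_apply, Finsupp.single_apply, if_neg (fun hh => h hh.symm), Nat.sub_zero]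

lemma sub_single_apply_self {N : ℕ} (α : Fin N →₀ ℕ) (j : Fin N) :
    ((α - Finsupp.single j 1 : _ →₀ ℕ) j) = α j - 1 := by
  rw [Finsupp.tsub_apply, Finsupp.single_apply, if_pos rfl]

lemma degree_sub_single {N : ℕ} (α : Fin N →₀ ℕ) (j : Fin N) (h : α j ≠ 0) :
    (α - Finsupp.single j 1).degree + 1 = α.degree := by
  rw [degree_eq_sum_univ, degree_eq_sum_univ,
    ← Finset.add_sum_erase Finset.univ _ (Finset.mem_univ j),
    ← Finset.add_sum_erase Finset.univ α (Finset.mem_univ j),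
    sub_single_apply_self]
  have heq : ∑ i ∈ Finset.univ.erase j, ((α - Finsupp.single j 1 : _ →₀ ℕ) i)
      = ∑ i ∈ Finset.univ.erase j, α i :=
    Finset.sum_congr rfl fun i hi => sub_single_apply_ne α j i (Finset.ne_of_mem_erase hi)
  omega

lemma factorial_prod_sub_single {N : ℕ} (α : Fin N →₀ ℕ) (j : Fin N) (h : α j ≠ 0) :
    (α j) * ∏ i : Fin N, (((α - Finsupp.single j 1 : _ →₀ ℕ) i)).factorial
      = ∏ i : Fin N, (α i).factorial := by
  rw [← Finset.mul_prod_erase Finset.univ _ (Finset.mem_univ j),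
    ← Finset.mul_prod_erase Finset.univ (fun i => (α i).factorial) (Finset.mem_univ j),
    sub_single_apply_self]
  have heq : ∏ i ∈ Finset.univ.erase j, (((α - Finsupp.single j 1 : _ →₀ ℕ) i)).factorial
      = ∏ i ∈ Finset.univ.erase j, (α i).factorial :=
    Finset.prod_congr rfl fun i hi => by
      rw [sub_single_apply_ne α j i (Finset.ne_of_mem_erase hi)]
  rw [heq, ← mul_assoc, Nat.mul_factorial_pred h]

lemma sub_single_eq_sub_single {N : ℕ} (α β : Fin N →₀ ℕ) (j : Fin N)
    (hα : α j ≠ 0) (hβ : β j ≠ 0)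
    (h : α - Finsupp.single j 1 = β - Finsupp.single j 1) : α = β := by
  have h1 : Finsupp.single j 1 ≤ α :=
    Finsupp.single_le_iff.2 (Nat.one_le_iff_ne_zero.2 hα)
  have h2 : Finsupp.single j 1 ≤ β :=
    Finsupp.single_le_iff.2 (Nat.one_le_iff_ne_zero.2 hβ)
  rw [← tsub_add_cancel_of_le h1, ← tsub_add_cancel_of_le h2, h]

lemma Rform_monomial (m : ℕ) : ∀ (α β : Fin (2 * n) →₀ ℕ) (x y : ℂ),
    Rform n m (monomial α x) (monomial β y)
      = if α = β ∧ α.degree = m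
          then x * y * ((m.factorial * ∏ i : Fin (2 * n), (α i).factorial : ℕ) : ℂ)
          else 0 := by
  induction m with
  | zero =>
    intro α β x y
    classical
    rw [Rform, constantCoeff_monomial, constantCoeff_monomial]
    by_cases hα : α = 0
    · subst hα
      by_cases hβ : β = 0
      · subst hβ
        simp
      · rw [if_pos rfl, if_neg hβ, mul_zero, if_neg (fun hc => hβ hc.1.symm)]
    · have hcond : ¬(α = β ∧ α.degree = 0) :=
        fun hc => hα ((Finsupp.degree_eq_zero_iff α).1 hc.2)
    
      simp [hα, hcond]
  | succ m ih =>
    intro α β x y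
    classical
    rw [Rform]
    simp only [pderiv_monomial, ih]
    by_cases h : α = β ∧ α.degree = m + 1
    · obtain ⟨rfl, hd⟩ := h
      have hterm : ∀ j : Fin (2 * n),
          (if α - Finsupp.single j 1 = α - Finsupp.single j 1
             ∧ (α - Finsupp.single j 1).degree = m
           then (x * α j) * (y * α j)
             * ((m.factorial * ∏ i : Fin (2 * n), (((α - Finsupp.single j 1 : _ →₀ ℕ) i)).factorial : ℕ) : ℂ)
           else 0)
          = x * y * (α j : ℂ)
             * ((m.factorial * ∏ i : Fin (2 * n), (α i).factorial : ℕ) : ℂ) := by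
        intro j
        by_cases hj : α j = 0
        · split_ifs <;> simp [hj]
        · have hdeg : (α - Finsupp.single j 1).degree = m := by
            have := degree_sub_single α j hj
            omega
          rw [if_pos ⟨rfl, hdeg⟩, ← factorial_prod_sub_single α j hj]
          push_cast
          ring
      rw [Finset.sum_congr rfl fun j _ => hterm j, ← Finset.sum_mul, ← Finset.mul_sum,
        if_pos ⟨rfl, hd⟩]
      have hsum : ∑ j : Fin (2 * n), (α j : ℂ) = ((m + 1 : ℕ) : ℂ) := by
        rw [← Nat.cast_sum, ← degree_eq_sum_univ, hd]
      rw [hsum]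
      push_cast [Nat.factorial_succ]
      ring
    · rw [if_neg h]
      refine Finset.sum_eq_zero fun j _ => ?_
      split_ifs with hc
      · obtain ⟨he, hdeg⟩ := hc
        by_cases hαj : α j = 0
        · simp [hαj]
        · by_cases hβj : β j = 0
          · simp [hβj]
          · exfalso
            apply h
            have hαβ := sub_single_eq_sub_single α β j hαj hβj he
            have := degree_sub_single α j hαj
            exact ⟨hαβ, by omega⟩
      · rfl

lemma Rform_add_left (m : ℕ) :
    ∀ a a' c : MvPolynomial (Fin (2 * n)) ℂ,
      Rform n m (a + a') c = Rform n m a c + Rform n m a' c := by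
  induction m with
  | zero => intro a a' c; simp only [Rform, map_add]; ring
  | succ m ih => intro a a' c; simp only [Rform, map_add, ih, Finset.sum_add_distrib]

lemma Rform_zero_left (m : ℕ) (c : MvPolynomial (Fin (2 * n)) ℂ) :
    Rform n m 0 c = 0 := by
  induction m generalizing c with
  | zero => simp [Rform]
  | succ m ih => simp only [Rform, map_zero, ih, Finset.sum_const_zero]

lemma Rform_sum_left (m : ℕ) {ι : Type*} (s : Finset ι)
    (f : ι → MvPolynomial (Fin (2 * n)) ℂ) (c : MvPolynomial (Fin (2 * n)) ℂ) :
    Rform n m (∑ i ∈ s, f i) c = ∑ i ∈ s, Rform n m (f i) c := by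
  classical
  induction s using Finset.cons_induction with
  | empty => simpa using Rform_zero_left n m c
  | cons i s hi ih => rw [Finset.sum_cons, Finset.sum_cons, Rform_add_left, ih]

lemma Rform_add_right (m : ℕ) :
    ∀ a c c' : MvPolynomial (Fin (2 * n)) ℂ,
      Rform n m a (c + c') = Rform n m a c + Rform n m a c' := by
  induction m with
  | zero => intro a c c'; simp only [Rform, map_add]; ring
  | succ m ih => intro a c c'; simp only [Rform, map_add, ih, Finset.sum_add_distrib]

lemma Rform_zero_right (m : ℕ) (a : MvPolynomial (Fin (2 * n)) ℂ) :
    Rform n m a 0 = 0 := by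
  induction m generalizing a with
  | zero => simp [Rform]
  | succ m ih => simp only [Rform, map_zero, ih, Finset.sum_const_zero]

lemma Rform_sum_right (m : ℕ) (a : MvPolynomial (Fin (2 * n)) ℂ) {ι : Type*} (s : Finset ι)
    (f : ι → MvPolynomial (Fin (2 * n)) ℂ) :
    Rform n m a (∑ i ∈ s, f i) = ∑ i ∈ s, Rform n m a (f i) := by
  classical
  induction s using Finset.cons_induction with
  | empty => simpa using Rform_zero_right n m a
  | cons i s hi ih => rw [Finset.sum_cons, Finset.sum_cons, Rform_add_right, ih]

lemma Rform_left_expand (m : ℕ) (a : MvPolynomial (Fin (2 * n)) ℂ)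
    (β : Fin (2 * n) →₀ ℕ) (y : ℂ) :
    Rform n m a (monomial β y)
      = ∑ α ∈ a.support,
          (if α = β ∧ α.degree = m
            then coeff α a * y * ((m.factorial * ∏ i : Fin (2 * n), (α i).factorial : ℕ) : ℂ)
            else 0) := by
  conv_lhs => rw [as_sum a]
  rw [Rform_sum_left]
  exact Finset.sum_congr rfl fun α _ => Rform_monomial n m α β (coeff α a) y

lemma finsupp_sum_eq_degree (β : Fin (2 * n) →₀ ℕ) : (β.sum fun _ e => e) = β.degree := rfl

/-- the supersymmetric bilinear form `B(a,b) = (a ∗ b)(0)` on the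
Weyl algebra is nondegenerate: if `B(a,b) = 0` for all `b` then `a = 0`. -/
theorem bilinear_form_nondegenerate (π : Matrix (Fin (2 * n)) (Fin (2 * n)) ℂ)
    (hanti : π.transpose = -π) (hnondeg : IsUnit π.det)
    (a : MvPolynomial (Fin (2 * n)) ℂ)
    (h : ∀ b : MvPolynomial (Fin (2 * n)) ℂ, constantCoeff (moyal n π a b) = 0) :
    a = 0 := by
  classical
  by_contra ha
  set D := a.totalDegree with hD
  have hsupp : a.support.Nonempty := support_nonempty.2 ha
  obtain ⟨β₀, hβ₀mem, hβ₀deg⟩ : ∃ β ∈ a.support, β.degree = D := by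
    obtain ⟨β, hmem, heq⟩ :=
      Finset.exists_mem_eq_sup a.support hsupp (fun s : Fin (2 * n) →₀ ℕ => s.sum fun _ e => e)
    exact ⟨β, hmem, by rw [← finsupp_sum_eq_degree, ← heq]; rfl⟩
  set S : Finset (Fin (2 * n) →₀ ℕ) := a.support.filter (fun β => β.degree = D) with hS
  have hβ₀S : β₀ ∈ S := Finset.mem_filter.2 ⟨hβ₀mem, hβ₀deg⟩
  set c : MvPolynomial (Fin (2 * n)) ℂ :=
    ∑ β ∈ S, monomial β (starRingEnd ℂ (coeff β a)) with hc
  set T : ℂ := ∑ β ∈ S, coeff β a * starRingEnd ℂ (coeff β a)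
      * ((D.factorial * ∏ i : Fin (2 * n), (β i).factorial : ℕ) : ℂ) with hT
  have key : ∀ m : ℕ, Rform n m a c = if m = D then T else 0 := by
    intro m
    rw [hc, Rform_sum_right]
    by_cases hm : m = D
    · subst hm
      rw [if_pos rfl, hT]
      refine Finset.sum_congr rfl fun β hβ => ?_
      obtain ⟨hβmem, hβdeg⟩ := Finset.mem_filter.1 hβ
      rw [Rform_left_expand]
      rw [Finset.sum_eq_single_of_mem β hβmem]
      · rw [if_pos ⟨rfl, hβdeg⟩]
      · intro α _ hne
        rw [if_neg (fun hc' => hne hc'.1)]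
    · rw [if_neg hm]
      refine Finset.sum_eq_zero fun β hβ => ?_
      obtain ⟨hβmem, hβdeg⟩ := Finset.mem_filter.1 hβ
      rw [Rform_left_expand]
      refine Finset.sum_eq_zero fun α _ => ?_
      rw [if_neg]
      rintro ⟨rfl, hdeg⟩
      exact hm (hdeg ▸ hβdeg ▸ rfl)
  have h0 := h (aeval (vmap n π) c)
  rw [constantCoeff_moyal] at h0
  have h1 : ∀ m ∈ Finset.range (D + 1),
      Complex.I ^ m / (m.factorial : ℂ) * Pform n π m a (aeval (vmap n π) c)
        = Complex.I ^ m / (m.factorial : ℂ) * (if m = D then T else 0) := by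
    intro m _
    rw [Pform_vmap n π hnondeg, key]
  rw [Finset.sum_congr rfl h1] at h0
  rw [Finset.sum_eq_single_of_mem D (Finset.mem_range.2 (Nat.lt_succ_self D))
      (fun m _ hm => by rw [if_neg hm, mul_zero]), if_pos rfl] at h0
  have hTpos : (0 : ℝ) < ∑ β ∈ S,
      Complex.normSq (coeff β a) * ((D.factorial * ∏ i : Fin (2 * n), (β i).factorial : ℕ) : ℝ) := by
    refine Finset.sum_pos' (fun β _ => ?_) ⟨β₀, hβ₀S, ?_⟩
    · exact mul_nonneg (Complex.normSq_nonneg _) (Nat.cast_nonneg _)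
    · apply mul_pos
      · exact Complex.normSq_pos.2 (mem_support_iff.1 hβ₀mem)
      · have : 0 < D.factorial * ∏ i : Fin (2 * n), (β₀ i).factorial :=
          Nat.mul_pos D.factorial_pos (Finset.prod_pos fun i _ => Nat.factorial_pos _)
        exact_mod_cast this
  have hTval : T = ((∑ β ∈ S,
      Complex.normSq (coeff β a) * ((D.factorial * ∏ i : Fin (2 * n), (β i).factorial : ℕ) : ℝ) : ℝ) : ℂ) := by
    rw [hT, Complex.ofReal_sum]
    refine Finset.sum_congr rfl fun β _ => ?_
    rw [Complex.mul_conj]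
    push_cast
    ring
  have hTne : T ≠ 0 := by
    rw [hTval]
    exact_mod_cast ne_of_gt hTpos
  have hcoef : Complex.I ^ D / (D.factorial : ℂ) ≠ 0 :=
    div_ne_zero (pow_ne_zero _ Complex.I_ne_zero)
      (Nat.cast_ne_zero.2 (Nat.factorial_ne_zero _))
  exact mul_ne_zero hcoef hTne h0
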